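/- Let f: ℝ → ℝ be given by f(x) = x e^x. For each w > 0, the principal solution s = W(w) of f(s) = w satisfies: for every sequence of positive reals (a_m) with a_m = Σ over the solutions z of f(z) = w (in the relevant factorization) of z^{-m}, one has W(w) = lim_{m→∞} a_m^{-1/m} whenever W(w) is the smallest-modulus solution. In particular, if g(z) = z e^z − w has a unique real zero z₁ = W(w) of smallest modulus among all its complex zeros, then z₁ = lim_{m→∞} (Σ_z z^{-m})^{-1/m} where the sum runs over all zeros z of g with the series absolutely convergent. -/

import Mathlib

open Filter
open Topology

/-- Root extraction for the Lambert-W equation. Fix `w > 0` and let `z : ℕ → ℂ` enumerate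
(injectively) the zeros of `g(ζ) = ζ e^ζ - w`. Suppose `z 0` is real (the principal
solution `W(w)`), of strictly smallest modulus among all zeros, and that the generalized
zeta series `∑' n, ‖z n‖^(-m)` converges for all `m ≥ 2`. Then
`z 0 = lim_{m → ∞} (∑' n, (z n)^(-m)) ^ (-1/m)` (complex power). -/
theorem lambertW_root_extraction (w : ℝ) (hw : 0 < w) (z : ℕ → ℂ)
    (hinj : Function.Injective z)
    (hzeros : ∀ s : ℂ, s * Complex.exp s - w = 0 ↔ ∃ n, s = z n)
    (hreal : (z 0).im = 0) (hposre : 0 < (z 0).re)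
    (hmin : ∀ n, n ≠ 0 → ‖z 0‖ < ‖z n‖)
    (hsum : ∀ m : ℕ, 2 ≤ m → Summable fun n => ‖z n‖ ^ (-(m : ℝ))) :
    Tendsto (fun m : ℕ => (∑' n, (z n) ^ (-(m : ℤ))) ^ (-(1 : ℂ) / m))
      atTop (nhds (z 0)) := by
  have hz_ne : ∀ n, z n ≠ 0 := by
    intro n hn
    have h := (hzeros (z n)).mpr ⟨n, rfl⟩
    rw [hn] at h
    simp at h
    exact hw.ne' (by exact_mod_cast h)
  set x : ℝ := (z 0).re with hxdef
  have hxpos : 0 < x := hposre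
  have hz0 : z 0 = (x : ℂ) := by apply Complex.ext <;> simp [hreal, hxdef]
  -- ratio bounds
  have hr : ∀ n : ℕ, ‖z 0 / z (n + 1)‖ < 1 := by
    intro n
    rw [norm_div, div_lt_one (norm_pos_iff.mpr (hz_ne (n + 1)))]
    exact hmin (n + 1) (Nat.succ_ne_zero n)
  have hrpos : ∀ n : ℕ, (0:ℝ) ≤ ‖z 0 / z (n + 1)‖ := fun n => norm_nonneg _
  -- summability of the square bound
  have hb : Summable (fun n : ℕ => ‖z 0 / z (n + 1)‖ ^ 2) := by
    have h2 : Summable (fun n : ℕ => ‖z n‖ ^ (-(2:ℝ))) := hsum 2 le_rfl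
    have h2' : Summable (fun n : ℕ => ‖z (n+1)‖ ^ (-(2:ℝ))) :=
      h2.comp_injective fun a b h => by simpa using h
    have : Summable (fun n : ℕ => ‖z 0‖ ^ 2 * ‖z (n+1)‖ ^ (-(2:ℝ))) := h2'.mul_left _
    refine this.congr fun n => ?_
    rw [norm_div, div_pow, div_eq_mul_inv,
        show (-(2:ℝ)) = ((-2 : ℤ):ℝ) by norm_num, Real.rpow_intCast]
    norm_num
  -- tail T m
  set T : ℕ → ℂ := fun m => ∑' n : ℕ, (z 0 / z (n + 1)) ^ m with hTdef
  have hT : Tendsto T atTop (𝓝 0) := by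
    have := tendsto_tsum_of_dominated_convergence (𝓕 := atTop)
      (f := fun m n => (z 0 / z (n + 1)) ^ m) (g := fun _ => (0:ℂ)) hb
      (fun n => tendsto_pow_atTop_nhds_zero_of_norm_lt_one (hr n))
      (by
        filter_upwards [eventually_ge_atTop 2] with m hm n
        rw [norm_pow]
        exact pow_le_pow_of_le_one (hrpos n) (hr n).le hm)
    simpa using this
  -- main identity for the sum
  have hS : ∀ m : ℕ, 2 ≤ m →
      (∑' n, (z n) ^ (-(m : ℤ))) = (z 0) ^ (-(m : ℤ)) * (1 + T m) := by
    intro m hm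
    have hsm : Summable (fun n : ℕ => (z n) ^ (-(m : ℤ))) := by
      refine Summable.of_norm ((hsum m hm).congr fun n => ?_)
      rw [norm_zpow]
      rw [show (-(m:ℝ)) = ((-(m:ℤ) : ℤ) : ℝ) by push_cast; ring, Real.rpow_intCast]
    rw [Summable.tsum_eq_zero_add hsm]
    have hterm : ∀ n : ℕ, (z 0 / z (n + 1)) ^ m = (z 0) ^ (m:ℕ) * (z (n+1)) ^ (-(m:ℤ)) := by
      intro n
      rw [div_pow, div_eq_mul_inv, zpow_neg, zpow_natCast]
    have : T m = (z 0) ^ (m:ℕ) * ∑' n : ℕ, (z (n+1)) ^ (-(m:ℤ)) := by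
      rw [hTdef]
      simp only [hterm]
      exact tsum_mul_left
    rw [this, mul_add, mul_one, ← mul_assoc]
    rw [show (z 0) ^ (-(m : ℤ)) * (z 0) ^ (m:ℕ) = 1 by
      rw [← zpow_natCast (z 0) m, ← zpow_add₀ (hz_ne 0)]; simp]
    rw [one_mul]
  -- eventual formula
  have hEv : ∀ᶠ m : ℕ in atTop,
      (∑' n, (z n) ^ (-(m : ℤ))) ^ (-(1 : ℂ) / m)
        = Complex.exp ((Real.log x : ℂ) - Complex.log (1 + T m) / m) := by
    have hTn : Tendsto (fun m => ‖T m‖) atTop (𝓝 0) := by simpa using hT.norm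
    filter_upwards [eventually_ge_atTop 2,
      hTn.eventually (gt_mem_nhds (by norm_num : (0:ℝ) < 1/2))] with m hm hTm
    have h1 : (1 : ℂ) + T m ≠ 0 := by
      intro h
      have : T m = -1 := by linear_combination h
      rw [this] at hTm; norm_num at hTm
    have hxm : (0:ℝ) < x ^ (-(m:ℤ)) := zpow_pos hxpos _
    have hSm : (∑' n, (z n) ^ (-(m : ℤ)))
        = ((x ^ (-(m:ℤ)) : ℝ) : ℂ) * (1 + T m) := by
      rw [hS m hm, hz0]; push_cast; ring
    have hSne : (∑' n, (z n) ^ (-(m : ℤ))) ≠ 0 := by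
      rw [hSm]
      exact mul_ne_zero (by exact_mod_cast hxm.ne') h1
    rw [Complex.cpow_def_of_ne_zero hSne]
    congr 1
    rw [hSm, Complex.log_ofReal_mul hxm h1, Real.log_zpow]
    have hmne : (m : ℂ) ≠ 0 := by
      exact_mod_cast Nat.cast_ne_zero.mpr (by omega : m ≠ 0)
    push_cast
    field_simp
    ring
  -- limit of the RHS
  have hlog : Tendsto (fun m : ℕ => Complex.log (1 + T m)) atTop (𝓝 0) := by
    have hcont : ContinuousAt Complex.log 1 :=
      continuousAt_clog Complex.one_mem_slitPlane
    have h1 : Tendsto (fun m => (1:ℂ) + T m) atTop (𝓝 1) := by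
      simpa using (tendsto_const_nhds (x := (1:ℂ))).add hT
    simpa [Function.comp_def] using hcont.tendsto.comp h1
  have hinv : Tendsto (fun m : ℕ => ((m : ℂ))⁻¹) atTop (𝓝 0) := by
    have : Tendsto (fun m : ℕ => ((m : ℝ))⁻¹) atTop (𝓝 0) :=
      tendsto_inv_atTop_zero.comp tendsto_natCast_atTop_atTop
    have h2 := (Complex.continuous_ofReal.tendsto 0).comp this
    refine Tendsto.congr (fun m => ?_) (by simpa using h2)
    simp
  have hRHS : Tendsto (fun m : ℕ => Complex.exp ((Real.log x : ℂ) - Complex.log (1 + T m) / m))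
      atTop (𝓝 (z 0)) := by
    have hin : Tendsto (fun m : ℕ => (Real.log x : ℂ) - Complex.log (1 + T m) / m)
        atTop (𝓝 ((Real.log x : ℂ))) := by
      have := (tendsto_const_nhds (x := ((Real.log x : ℝ) : ℂ))).sub
        (by simpa [div_eq_mul_inv] using hlog.mul hinv)
      simpa [div_eq_mul_inv] using this
    have := (Complex.continuous_exp.tendsto _).comp hin
    have hex : Complex.exp ((Real.log x : ℂ)) = z 0 := by
      rw [hz0, ← Complex.ofReal_exp, Real.exp_log hxpos]
    rw [hex] at this
    exact this
  exact hRHS.congr' (by filter_upwards [hEv] with m h using h.symm)
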